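/- Let m ≥ 1 and k ≥ 1, let D_t ⊆ ℂ^k be a closed and bounded set, let a_0, …, a_{m−1} : D_t → ℂ be continuous functions, write a(t) = (a_0(t), …, a_{m−1}(t)) ∈ ℂ^m, and suppose Λ̄_m(a(t)) < 0 for every t ∈ D_t. Let D_w ⊆ ℂ^m be a bounded set. Then there exist C̃ ≥ 0 and κ > 0 such that for every t ∈ D_t, every N ∈ D_w, and every solution w of the Cauchy problem with coefficients a(t) and initial data N, one has |w^{(i)}(ξ)| ≤ C̃ (1 + ξ^{m−1}) e^{−κ ξ} for all i ∈ {0, …, m−1} and all ξ ≥ 0. -/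

import Mathlib

open Polynomial

/-- The characteristic polynomial `λ^m - a_{m-1} λ^{m-1} - ⋯ - a_1 λ - a_0`. -/
noncomputable def charPoly (m : ℕ) (M : Fin m → ℂ) : Polynomial ℂ :=
  X ^ m - ∑ j : Fin m, C (M j) * X ^ (j : ℕ)

/-- `Λ̄_m(M)`: the maximum of the real parts of the roots of `charPoly m M`. -/
noncomputable def maxReRoots (m : ℕ) (M : Fin m → ℂ) : ℝ :=
  sSup (Complex.re '' {z : ℂ | z ∈ (charPoly m M).roots})

/-- `w` is a solution of the Cauchy problem with coefficients `M` and initial data `N`. -/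
def IsCauchySolution (m : ℕ) (M N : Fin m → ℂ) (w : ℝ → ℂ) : Prop :=
  (∀ i < m, Differentiable ℝ (iteratedDeriv i w)) ∧
  (∀ ξ : ℝ, 0 ≤ ξ → iteratedDeriv m w ξ = ∑ j : Fin m, M j * iteratedDeriv (j : ℕ) w ξ) ∧
  (∀ j : Fin m, iteratedDeriv (j : ℕ) w 0 = N j)


noncomputable def applyD (m : ℕ) (p : Polynomial ℂ) (w : ℝ → ℂ) : ℝ → ℂ :=
  fun ξ => ∑ j ∈ Finset.range (m + 1), p.coeff j * iteratedDeriv j w ξ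

lemma applyD_sub (m : ℕ) (p q : Polynomial ℂ) (w : ℝ → ℂ) (ξ : ℝ) :
    applyD m (p - q) w ξ = applyD m p w ξ - applyD m q w ξ := by
  simp [applyD, coeff_sub, sub_mul, Finset.sum_sub_distrib]

lemma applyD_C_mul (m : ℕ) (lam : ℂ) (p : Polynomial ℂ) (w : ℝ → ℂ) (ξ : ℝ) :
    applyD m (C lam * p) w ξ = lam * applyD m p w ξ := by
  simp [applyD, coeff_C_mul, Finset.mul_sum, mul_assoc]

lemma applyD_one (m : ℕ) (w : ℝ → ℂ) (ξ : ℝ) : applyD m 1 w ξ = w ξ := by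
  simp [applyD, coeff_one]

lemma applyD_hasDerivAt (m : ℕ) (p : Polynomial ℂ) (hp : p.natDegree < m) (w : ℝ → ℂ)
    (hw : ∀ i < m, Differentiable ℝ (iteratedDeriv i w)) (ξ : ℝ) :
    HasDerivAt (applyD m p w) (applyD m (X * p) w ξ) ξ := by
  have hred : applyD m p w
      = fun x => ∑ j ∈ Finset.range m, p.coeff j * iteratedDeriv j w x := by
    funext x
    rw [applyD, Finset.sum_range_succ, coeff_eq_zero_of_natDegree_lt hp]
    simp
  have key : HasDerivAt (fun x => ∑ j ∈ Finset.range m, p.coeff j * iteratedDeriv j w x)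
      (∑ j ∈ Finset.range m, p.coeff j * iteratedDeriv (j+1) w ξ) ξ := by
    apply HasDerivAt.fun_sum
    intro j hj
    have hd : HasDerivAt (iteratedDeriv j w) (iteratedDeriv (j+1) w ξ) ξ := by
      rw [iteratedDeriv_succ]
      exact ((hw j (Finset.mem_range.mp hj)) ξ).hasDerivAt
    exact hd.const_mul _
  rw [hred]
  convert key using 1
  rw [applyD, Finset.sum_range_succ']
  simp only [coeff_X_mul]
  have h0 : (X * p).coeff 0 = 0 := by simp [coeff_X_mul_zero]
  rw [h0]; simp


lemma coeff_prod_linear_bound (ℓ : List ℂ) (j : ℕ) :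
    ‖((ℓ.map fun z => X - C z).prod).coeff j‖ ≤ (ℓ.map fun z => 1 + ‖z‖).prod := by
  induction ℓ generalizing j with
  | nil =>
    simp only [List.map_nil, List.prod_nil, coeff_one]
    split <;> simp
  | cons z ℓ ih =>
    have hprod : (0:ℝ) ≤ (ℓ.map fun z => 1 + ‖z‖).prod :=
      List.prod_nonneg (by simp; intro x _; positivity)
    simp only [List.map_cons, List.prod_cons, sub_mul]
    rcases j with _ | j
    · rw [coeff_sub, coeff_X_mul_zero, coeff_C_mul]
      simp only [zero_sub, norm_neg, norm_mul]
      have h1 : ‖z‖ ≤ 1 + ‖z‖ := by linarith [norm_nonneg z]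
      exact mul_le_mul h1 (ih 0) (norm_nonneg _) (by positivity)
    · rw [coeff_sub, coeff_X_mul, coeff_C_mul]
      have h2 : ‖((ℓ.map fun z => X - C z).prod).coeff j
            - z * ((ℓ.map fun z => X - C z).prod).coeff (j+1)‖
          ≤ ‖((ℓ.map fun z => X - C z).prod).coeff j‖
            + ‖z‖ * ‖((ℓ.map fun z => X - C z).prod).coeff (j+1)‖ := by
        refine (norm_sub_le _ _).trans ?_; rw [norm_mul]
      refine h2.trans ?_
      have h3 : ‖((ℓ.map fun z => X - C z).prod).coeff j‖
            + ‖z‖ * ‖((ℓ.map fun z => X - C z).prod).coeff (j+1)‖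
          ≤ (ℓ.map fun z => 1 + ‖z‖).prod + ‖z‖ * (ℓ.map fun z => 1 + ‖z‖).prod := by
        gcongr; exacts [ih j, ih (j+1)]
      refine h3.trans (le_of_eq ?_); ring



lemma charPoly_sum_degree (m : ℕ) (hm : 1 ≤ m) (M : Fin m → ℂ) :
    (∑ j : Fin m, C (M j) * X ^ (j : ℕ)).degree ≤ ((m - 1 : ℕ) : WithBot ℕ) := by
  apply (degree_sum_le _ _).trans
  simp only [Finset.sup_le_iff]
  intro j _
  have hj := j.2
  refine (degree_C_mul_X_pow_le _ _).trans ?_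
  exact_mod_cast (by omega : (j:ℕ) ≤ m - 1)

lemma charPoly_monic (m : ℕ) (hm : 1 ≤ m) (M : Fin m → ℂ) : (charPoly m M).Monic := by
  rw [charPoly]
  obtain ⟨n, rfl⟩ : ∃ n, m = n + 1 := ⟨m - 1, by omega⟩
  apply monic_X_pow_sub
  have h := charPoly_sum_degree (n+1) hm M
  simp only [Nat.add_sub_cancel] at h
  exact lt_of_le_of_lt h (by exact_mod_cast Nat.lt_succ_self n)

lemma charPoly_natDegree (m : ℕ) (hm : 1 ≤ m) (M : Fin m → ℂ) :
    (charPoly m M).natDegree = m := by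
  rw [charPoly, natDegree_sub_eq_left_of_natDegree_lt, natDegree_X_pow]
  rw [natDegree_X_pow]
  have := charPoly_sum_degree m hm M
  have h2 := natDegree_le_iff_degree_le.mpr this
  omega

lemma charPoly_coeff_lt (m : ℕ) (M : Fin m → ℂ) (j : Fin m) :
    (charPoly m M).coeff (j : ℕ) = -(M j) := by
  rw [charPoly, coeff_sub, coeff_X_pow, if_neg (by omega), finset_sum_coeff]
  simp only [coeff_C_mul, coeff_X_pow]
  rw [Finset.sum_eq_single j]
  · simp
  · intro b _ hb
    rw [if_neg, mul_zero]
    exact fun h => hb (Fin.ext h.symm)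
  · simp

lemma charPoly_coeff_m (m : ℕ) (hm : 1 ≤ m) (M : Fin m → ℂ) :
    (charPoly m M).coeff m = 1 := by
  have := (charPoly_monic m hm M).coeff_natDegree
  rwa [charPoly_natDegree m hm M] at this

lemma charPoly_root_bound (m : ℕ) (hm : 1 ≤ m) (M : Fin m → ℂ) (z : ℂ)
    (hz : z ∈ (charPoly m M).roots) : ‖z‖ ≤ 1 + ∑ j : Fin m, ‖M j‖ := by
  have hroot : Polynomial.eval z (charPoly m M) = 0 := (mem_roots'.mp hz).2
  have heq : z ^ m = ∑ j : Fin m, M j * z ^ (j : ℕ) := by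
    rw [charPoly] at hroot
    simp only [eval_sub, eval_pow, eval_X, eval_finset_sum, eval_mul, eval_C] at hroot
    linear_combination hroot
  have hsum : (0:ℝ) ≤ ∑ j : Fin m, ‖M j‖ := Finset.sum_nonneg fun _ _ => norm_nonneg _
  by_cases h1 : ‖z‖ ≤ 1
  · linarith
  push_neg at h1
  by_contra hc
  push_neg at hc
  have hz1 : (1:ℝ) ≤ ‖z‖ := h1.le
  have key : ‖z‖ ^ m ≤ (∑ j : Fin m, ‖M j‖) * ‖z‖ ^ (m - 1) := by
    calc ‖z‖ ^ m = ‖z ^ m‖ := (norm_pow z m).symm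
      _ ≤ ∑ j : Fin m, ‖M j * z ^ (j:ℕ)‖ := by rw [heq]; exact norm_sum_le _ _
      _ ≤ ∑ j : Fin m, ‖M j‖ * ‖z‖ ^ (m - 1) := by
          refine Finset.sum_le_sum fun j _ => ?_
          rw [norm_mul, norm_pow]
          have hj := j.2
          exact mul_le_mul_of_nonneg_left (pow_le_pow_right₀ hz1 (by omega)) (norm_nonneg _)
      _ = (∑ j : Fin m, ‖M j‖) * ‖z‖ ^ (m - 1) := by rw [Finset.sum_mul]
  have hpow : ‖z‖ ^ m = ‖z‖ ^ (m - 1) * ‖z‖ := by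
    rw [← pow_succ]; congr 1; omega
  have hpos : (0:ℝ) < ‖z‖ ^ (m - 1) := pow_pos (by linarith) _
  rw [hpow] at key
  nlinarith

lemma charPoly_roots_card (m : ℕ) (hm : 1 ≤ m) (M : Fin m → ℂ) :
    (charPoly m M).roots.card = m := by
  have h := splits_iff_card_roots.mp (IsAlgClosed.splits (charPoly m M))
  rwa [charPoly_natDegree m hm M] at h


lemma exp_deriv_aux (lam : ℂ) (s : ℝ) :
    HasDerivAt (fun s : ℝ => Complex.exp (lam * s)) (lam * Complex.exp (lam * s)) s := by
  have h1 : HasDerivAt (fun s : ℝ => (lam * s : ℂ)) lam s := by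
    simpa using (Complex.ofRealCLM.hasDerivAt (x := s)).const_mul lam
  simpa [mul_comm, Function.comp_def] using (Complex.hasDerivAt_exp (lam * s)).comp s h1

lemma varconst (v g : ℝ → ℂ) (lam : ℂ) (hv : Differentiable ℝ v)
    (heq : ∀ ξ, deriv v ξ = lam * v ξ + g ξ) (hg : Continuous g) (x : ℝ) :
    v x = Complex.exp (lam * x) * v 0 + ∫ s in (0:ℝ)..x, Complex.exp (lam * (x - s)) * g s := by
  have hh : ∀ s : ℝ, HasDerivAt (fun s : ℝ => Complex.exp (-lam * s) * v s)
      (Complex.exp (-lam * s) * g s) s := by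
    intro s
    have hd : HasDerivAt v (lam * v s + g s) s := by
      have := (hv s).hasDerivAt
      rwa [heq s] at this
    have h2 := (exp_deriv_aux (-lam) s).fun_mul hd
    exact h2.congr_deriv (by ring)
  have hcont : Continuous fun s : ℝ => Complex.exp (-lam * s) * g s := by
    exact (Complex.continuous_exp.comp (by continuity)).mul hg
  have hint := intervalIntegral.integral_eq_sub_of_hasDerivAt
    (f := fun s : ℝ => Complex.exp (-lam * s) * v s)
    (f' := fun s : ℝ => Complex.exp (-lam * s) * g s)
    (fun t _ => hh t) (hcont.intervalIntegrable 0 x)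
  rw [show Complex.exp (-lam * ((0:ℝ):ℂ)) * v 0 = v 0 by simp] at hint
  have key : Complex.exp (lam * x) * (Complex.exp (-lam * x) * v x) = v x := by
    rw [← mul_assoc, ← Complex.exp_add]
    ring_nf
    simp
  calc v x = Complex.exp (lam * x) * (Complex.exp (-lam * x) * v x) := key.symm
    _ = Complex.exp (lam * x) * (v 0 + ∫ s in (0:ℝ)..x, Complex.exp (-lam * s) * g s) := by
        congr 1
        rw [hint]
        ring
    _ = Complex.exp (lam * x) * v 0
        + ∫ s in (0:ℝ)..x, Complex.exp (lam * x) * (Complex.exp (-lam * s) * g s) := by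
        rw [mul_add, intervalIntegral.integral_const_mul]
    _ = Complex.exp (lam * x) * v 0 + ∫ s in (0:ℝ)..x, Complex.exp (lam * (x - s)) * g s := by
        congr 1
        apply intervalIntegral.integral_congr
        intro s _
        simp only []
        rw [← mul_assoc, ← Complex.exp_add]
        ring_nf

lemma ode_bound (v g : ℝ → ℂ) (lam : ℂ) (κ Cg C0 : ℝ) (n : ℕ)
    (hv : Differentiable ℝ v) (heq : ∀ ξ, deriv v ξ = lam * v ξ + g ξ) (hg : Continuous g)
    (hlam : lam.re ≤ -κ) (hC0 : ‖v 0‖ ≤ C0) (hCg : 0 ≤ Cg)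
    (hgb : ∀ s, 0 ≤ s → ‖g s‖ ≤ Cg * (1+s)^n * Real.exp (-κ*s)) (x : ℝ) (hx : 0 ≤ x) :
    ‖v x‖ ≤ (C0 + Cg) * (1+x)^(n+1) * Real.exp (-κ*x) := by
  have hC0' : 0 ≤ C0 := le_trans (norm_nonneg _) hC0
  have hexp : ∀ y : ℝ, 0 ≤ y → ‖Complex.exp (lam * y)‖ ≤ Real.exp (-κ*y) := by
    intro y hy
    rw [Complex.norm_exp]
    apply Real.exp_le_exp.mpr
    have : (lam * (y:ℂ)).re = lam.re * y := by simp [Complex.mul_re]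
    rw [this]
    exact mul_le_mul_of_nonneg_right hlam hy
  rw [varconst v g lam hv heq hg x]
  have hIcont : Continuous fun s : ℝ => Complex.exp (lam * ((x:ℂ) - s)) * g s :=
    (Complex.continuous_exp.comp (by continuity)).mul hg
  have step1 : ‖∫ s in (0:ℝ)..x, Complex.exp (lam * ((x:ℂ) - s)) * g s‖
      ≤ ∫ s in (0:ℝ)..x, ‖Complex.exp (lam * ((x:ℂ) - s)) * g s‖ :=
    intervalIntegral.norm_integral_le_integral_norm hx
  have step2 : (∫ s in (0:ℝ)..x, ‖Complex.exp (lam * ((x:ℂ) - s)) * g s‖)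
      ≤ ∫ _s in (0:ℝ)..x, Cg * (1+x)^n * Real.exp (-κ*x) := by
    apply intervalIntegral.integral_mono_on hx
    · exact (hIcont.norm).intervalIntegrable 0 x
    · exact intervalIntegrable_const
    · intro s hs
      obtain ⟨hs0, hsx⟩ := Set.mem_Icc.mp hs
      rw [norm_mul]
      have e1 : ‖Complex.exp (lam * ((x:ℂ) - s))‖ ≤ Real.exp (-κ*(x-s)) := by
        have := hexp (x - s) (by linarith)
        rwa [Complex.ofReal_sub] at this
      have e2 : ‖g s‖ ≤ Cg * (1+s)^n * Real.exp (-κ*s) := hgb s hs0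
      calc ‖Complex.exp (lam * ((x:ℂ) - s))‖ * ‖g s‖
          ≤ Real.exp (-κ*(x-s)) * (Cg * (1+s)^n * Real.exp (-κ*s)) := by
            exact mul_le_mul e1 e2 (norm_nonneg _) (Real.exp_nonneg _)
        _ = Cg * (1+s)^n * (Real.exp (-κ*(x-s)) * Real.exp (-κ*s)) := by ring
        _ = Cg * (1+s)^n * Real.exp (-κ*x) := by rw [← Real.exp_add]; ring_nf
        _ ≤ Cg * (1+x)^n * Real.exp (-κ*x) := by
            have : (1+s)^n ≤ (1+x)^n := pow_le_pow_left₀ (by linarith) (by linarith) n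
            have h0 : (0:ℝ) ≤ Real.exp (-κ*x) := Real.exp_nonneg _
            have h2 : Cg * Real.exp (-κ*x) * (1+s)^n ≤ Cg * Real.exp (-κ*x) * (1+x)^n :=
              mul_le_mul_of_nonneg_left this (by positivity)
            nlinarith
  rw [intervalIntegral.integral_const] at step2
  have hone : (1:ℝ) ≤ (1+x)^(n+1) := one_le_pow₀ (by linarith)
  have hxp : x * (1+x)^n ≤ (1+x)^(n+1) := by
    rw [pow_succ]
    have : (0:ℝ) ≤ (1+x)^n := pow_nonneg (by linarith) n
    nlinarith
  calc ‖Complex.exp (lam * x) * v 0 + ∫ s in (0:ℝ)..x, Complex.exp (lam * ((x:ℂ) - s)) * g s‖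
      ≤ ‖Complex.exp (lam * x) * v 0‖ + ‖∫ s in (0:ℝ)..x, Complex.exp (lam * ((x:ℂ) - s)) * g s‖ :=
        norm_add_le _ _
    _ ≤ Real.exp (-κ*x) * C0 + (x - 0) • (Cg * (1+x)^n * Real.exp (-κ*x)) := by
        gcongr
        · rw [norm_mul]
          exact mul_le_mul (hexp x hx) hC0 (norm_nonneg _) (Real.exp_nonneg _)
        · exact step1.trans step2
    _ ≤ (C0 + Cg) * (1+x)^(n+1) * Real.exp (-κ*x) := by
        rw [smul_eq_mul]
        have h0 : (0:ℝ) ≤ Real.exp (-κ*x) := Real.exp_nonneg _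
        have h1 : (0:ℝ) ≤ (1+x)^n := pow_nonneg (by linarith) n
        nlinarith [mul_le_mul_of_nonneg_right hxp (mul_nonneg hCg h0),
          mul_le_mul_of_nonneg_right hone (mul_nonneg hC0' h0)]


lemma monic_prod_linear (L : List ℂ) : ((L.map fun z => X - C z).prod).Monic := by
  induction L with
  | nil => simpa using monic_one
  | cons z L ih => simpa using (monic_X_sub_C z).mul ih

lemma natDegree_prod_linear (L : List ℂ) :
    ((L.map fun z => X - C z).prod).natDegree = L.length := by
  induction L with
  | nil => simp
  | cons z L ih =>
    simp only [List.map_cons, List.prod_cons, List.length_cons]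
    rw [Monic.natDegree_mul (monic_X_sub_C z) (monic_prod_linear L), natDegree_X_sub_C, ih]
    omega

lemma list_prod_le (L : List ℝ) (B : ℝ) (hB : 1 ≤ B) (h : ∀ x ∈ L, 1 ≤ x ∧ x ≤ B) :
    L.prod ≤ B ^ L.length := by
  induction L with
  | nil => simp
  | cons x L ih =>
    simp only [List.prod_cons, List.length_cons]
    have hx := h x List.mem_cons_self
    have hL : L.prod ≤ B ^ L.length := ih fun y hy => h y (List.mem_cons_of_mem x hy)
    have hL1 : (0:ℝ) ≤ L.prod := List.prod_nonneg fun y hy => by linarith [(h y (List.mem_cons_of_mem x hy)).1]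
    calc x * L.prod ≤ B * B ^ L.length :=
          mul_le_mul hx.2 hL hL1 (by linarith)
      _ = B ^ (L.length + 1) := by rw [pow_succ]; ring

lemma pow_one_add_le (n : ℕ) (ξ : ℝ) (hξ : 0 ≤ ξ) :
    (1 + ξ) ^ n ≤ 2 ^ n * (1 + ξ ^ n) := by
  rcases le_total ξ 1 with h | h
  · have h1 : (1 + ξ) ^ n ≤ 2 ^ n := pow_le_pow_left₀ (by linarith) (by linarith) n
    have h2 : (0:ℝ) ≤ ξ ^ n := pow_nonneg hξ n
    nlinarith [pow_pos (show (0:ℝ) < 2 by norm_num) n]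
  · have h1 : (1 + ξ) ^ n ≤ (2 * ξ) ^ n := pow_le_pow_left₀ (by linarith) (by linarith) n
    rw [mul_pow] at h1
    have h2 : (0:ℝ) < 2 ^ n := pow_pos (by norm_num) n
    nlinarith [pow_nonneg hξ n]


lemma ode_bound_base (v g : ℝ → ℂ) (lam : ℂ) (κ : ℝ)
    (hv : Differentiable ℝ v) (heq : ∀ ξ, deriv v ξ = lam * v ξ + g ξ)
    (hg0 : ∀ s, 0 ≤ s → g s = 0) (hlam : lam.re ≤ -κ) (x : ℝ) (hx : 0 ≤ x) :
    ‖v x‖ ≤ ‖v 0‖ * Real.exp (-κ * x) := by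
  have hh : ∀ s : ℝ, HasDerivAt (fun s : ℝ => Complex.exp (-lam * s) * v s)
      (Complex.exp (-lam * s) * g s) s := by
    intro s
    have hd : HasDerivAt v (lam * v s + g s) s := by
      have := (hv s).hasDerivAt; rwa [heq s] at this
    have h2 := (exp_deriv_aux (-lam) s).fun_mul hd
    exact h2.congr_deriv (by ring)
  have hconst := constant_of_has_deriv_right_zero
    (f := fun s : ℝ => Complex.exp (-lam * s) * v s) (a := 0) (b := x)
    (HasDerivAt.continuousOn (fun s _ => hh s))
    (fun s hs => by
      have h := (hh s).hasDerivWithinAt (s := Set.Ici s)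
      rwa [hg0 s hs.1, mul_zero] at h)
  have hx' := hconst x (Set.mem_Icc.mpr ⟨hx, le_refl x⟩)
  simp only [Complex.ofReal_zero, mul_zero, Complex.exp_zero, one_mul] at hx'
  -- hx' : exp(-lam x) * v x = v 0
  have hvx : v x = Complex.exp (lam * x) * v 0 := by
    rw [← hx', ← mul_assoc, ← Complex.exp_add]
    ring_nf
    simp
  rw [hvx, norm_mul]
  have : ‖Complex.exp (lam * x)‖ ≤ Real.exp (-κ * x) := by
    rw [Complex.norm_exp]
    apply Real.exp_le_exp.mpr
    have : (lam * (x:ℂ)).re = lam.re * x := by simp [Complex.mul_re]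
    rw [this]
    exact mul_le_mul_of_nonneg_right hlam hx
  calc ‖Complex.exp (lam * x)‖ * ‖v 0‖ ≤ Real.exp (-κ*x) * ‖v 0‖ :=
        mul_le_mul_of_nonneg_right this (norm_nonneg _)
    _ = ‖v 0‖ * Real.exp (-κ*x) := by ring

lemma main_estimate (m : ℕ) (hm : 1 ≤ m) (M N : Fin m → ℂ) (w : ℝ → ℂ)
    (hw : IsCauchySolution m M N w) (κ R Cw : ℝ) (hκ : 0 < κ) (hR : 1 ≤ R) (hCw0 : 0 ≤ Cw)
    (hroots : ∀ z ∈ (charPoly m M).roots, z.re ≤ -κ ∧ ‖z‖ ≤ R)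
    (hCw : ∀ j : Fin m, ‖N j‖ ≤ Cw) :
    ∀ r < m, ∀ ξ : ℝ, 0 ≤ ξ → ‖iteratedDeriv r w ξ‖ ≤
      (m * (m * (1+R)^m * Cw) * (1 + (1+R)^m)^m) * (1+ξ)^(m-1) * Real.exp (-κ*ξ) := by
  obtain ⟨hdiff, hode, hinit⟩ := hw
  set ℓ : List ℂ := (charPoly m M).roots.toList with hℓ
  have hlen : ℓ.length = m := by
    rw [hℓ, Multiset.length_toList, charPoly_roots_card m hm M]
  have hmem : ∀ z ∈ ℓ, z.re ≤ -κ ∧ ‖z‖ ≤ R := fun z hz =>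
    hroots z (by rwa [hℓ, Multiset.mem_toList] at hz)
  set q : ℕ → Polynomial ℂ := fun i => ((ℓ.drop i).map fun z => X - C z).prod with hqdef
  have hqdeg : ∀ i, (q i).natDegree = m - i := by
    intro i; rw [hqdef]; simp only []
    rw [natDegree_prod_linear, List.length_drop, hlen]
  have hq0 : q 0 = charPoly m M := by
    rw [hqdef]; simp only [List.drop_zero]
    have h1 : (↑ℓ : Multiset ℂ) = (charPoly m M).roots := Multiset.coe_toList _
    have h2 := prod_multiset_X_sub_C_of_monic_of_roots_card_eq (charPoly_monic m hm M)
      (by rw [charPoly_roots_card m hm M, charPoly_natDegree m hm M])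
    calc (ℓ.map fun z => X - C z).prod
        = (((↑ℓ : Multiset ℂ)).map fun z => X - C z).prod := by
          rw [Multiset.map_coe, Multiset.prod_coe]
      _ = charPoly m M := by rw [h1]; exact h2
  have hqstep : ∀ i (hi : i < m), q i = (X - C (ℓ.get ⟨i, by omega⟩)) * q (i+1) := by
    intro i hi
    rw [hqdef]; simp only []
    rw [List.drop_eq_getElem_cons (by omega), List.map_cons, List.prod_cons]
    rfl
  -- coefficient bound
  set CB : ℝ := (1+R)^m with hCBdef
  have hCB1 : 1 ≤ CB := one_le_pow₀ (by linarith)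
  have hCB0 : 0 ≤ CB := by linarith
  have hcoeff : ∀ i j, ‖(q i).coeff j‖ ≤ CB := by
    intro i j
    refine (coeff_prod_linear_bound (ℓ.drop i) j).trans ?_
    have h1 : ((ℓ.drop i).map fun z => 1 + ‖z‖).prod ≤ (1+R) ^ ((ℓ.drop i).map fun z => 1 + ‖z‖).length := by
      apply list_prod_le _ _ (by linarith)
      intro x hx
      obtain ⟨z, hz, rfl⟩ := List.mem_map.mp hx
      have := (hmem z (List.mem_of_mem_drop hz)).2
      constructor <;> [linarith [norm_nonneg z]; linarith]
    refine h1.trans ?_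
    rw [List.length_map, List.length_drop, hlen]
    exact pow_le_pow_right₀ (by linarith) (by omega)
  -- the chain of functions
  set u : ℕ → ℝ → ℂ := fun i => applyD m (q i) w with hudef
  -- u 0 vanishes on [0, ∞)
  have hu0 : ∀ ξ : ℝ, 0 ≤ ξ → u 0 ξ = 0 := by
    intro ξ hξ
    rw [hudef]; simp only []
    rw [hq0, applyD, Finset.sum_range_succ, charPoly_coeff_m m hm M, one_mul]
    have hs1 : ∑ j ∈ Finset.range m, (charPoly m M).coeff j * iteratedDeriv j w ξ
        = ∑ j : Fin m, (charPoly m M).coeff (j:ℕ) * iteratedDeriv (j:ℕ) w ξ :=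
      (Fin.sum_univ_eq_sum_range (fun j => (charPoly m M).coeff j * iteratedDeriv j w ξ) m).symm
    have hs2 : ∑ j : Fin m, (charPoly m M).coeff (j:ℕ) * iteratedDeriv (j:ℕ) w ξ
        = -∑ j : Fin m, M j * iteratedDeriv (j:ℕ) w ξ := by
      rw [← Finset.sum_neg_distrib]
      refine Finset.sum_congr rfl fun j _ => ?_
      rw [charPoly_coeff_lt m M j]; ring
    rw [hs1, hs2, hode ξ hξ]; ring
  -- derivative chain
  have hchain : ∀ i (hi : i < m), Differentiable ℝ (u (i+1)) ∧
      ∀ ξ : ℝ, deriv (u (i+1)) ξ = (ℓ.get ⟨i, by omega⟩) * u (i+1) ξ + u i ξ := by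
    intro i hi
    have hdd : ∀ ξ : ℝ, HasDerivAt (u (i+1)) (applyD m (X * q (i+1)) w ξ) ξ := fun ξ =>
      applyD_hasDerivAt m (q (i+1)) (by rw [hqdeg]; omega) w hdiff ξ
    have hdiffu : Differentiable ℝ (u (i+1)) := fun ξ => (hdd ξ).differentiableAt
    refine ⟨hdiffu, fun ξ => ?_⟩
    have hder : deriv (u (i+1)) ξ = applyD m (X * q (i+1)) w ξ := (hdd ξ).deriv
    have hfac : u i ξ = applyD m (X * q (i+1)) w ξ - (ℓ.get ⟨i, by omega⟩) * u (i+1) ξ := by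
      have h5 : u i ξ = applyD m ((X - C (ℓ.get ⟨i, by omega⟩)) * q (i+1)) w ξ := by
        rw [hudef]; simp only []; rw [hqstep i hi]
      rw [h5, sub_mul, applyD_sub, applyD_C_mul]
    rw [hder, hfac]; ring
  -- initial-value bounds
  set C0 : ℝ := m * CB * Cw with hC0def
  have hC00 : 0 ≤ C0 := by
    rw [hC0def]; positivity
  have hu0norm : ∀ i, 1 ≤ i → ‖u i 0‖ ≤ C0 := by
    intro i hi1
    rw [hudef]; simp only [applyD]
    rw [Finset.sum_range_succ,
      coeff_eq_zero_of_natDegree_lt (by rw [hqdeg]; omega : (q i).natDegree < m),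
      zero_mul, add_zero]
    calc ‖∑ j ∈ Finset.range m, (q i).coeff j * iteratedDeriv j w 0‖
        ≤ ∑ j ∈ Finset.range m, ‖(q i).coeff j * iteratedDeriv j w 0‖ := norm_sum_le _ _
      _ ≤ ∑ _j ∈ Finset.range m, CB * Cw := by
          refine Finset.sum_le_sum fun j hj => ?_
          rw [norm_mul]
          have hj' := Finset.mem_range.mp hj
          rw [hinit ⟨j, hj'⟩]
          exact mul_le_mul (hcoeff i j) (hCw ⟨j, hj'⟩) (norm_nonneg _) hCB0
      _ = C0 := by
          rw [Finset.sum_const, Finset.card_range, nsmul_eq_mul, hC0def]; ring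
  -- main induction along the factorization
  have hmain : ∀ i : ℕ, i + 1 ≤ m → ∀ ξ : ℝ, 0 ≤ ξ →
      ‖u (i+1) ξ‖ ≤ ((i:ℝ)+1) * C0 * (1+ξ)^i * Real.exp (-κ*ξ) := by
    intro i
    induction i with
    | zero =>
      intro hi ξ hξ
      have hc := hchain 0 (by omega)
      have hlam : (ℓ.get ⟨0, by omega⟩).re ≤ -κ := (hmem _ (ℓ.get_mem _)).1
      refine (ode_bound_base (u 1) (u 0) _ κ hc.1 hc.2 hu0 hlam ξ hξ).trans ?_
      have := mul_le_mul_of_nonneg_right (hu0norm 1 le_rfl) (Real.exp_nonneg (-κ*ξ))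
      simpa using this
    | succ i ih =>
      intro hi ξ hξ
      have hc := hchain (i+1) (by omega)
      have hlam : (ℓ.get ⟨i+1, by omega⟩).re ≤ -κ := (hmem _ (ℓ.get_mem _)).1
      have hgcont : Continuous (u (i+1)) := (hchain i (by omega)).1.continuous
      have hb := ode_bound (u (i+2)) (u (i+1)) _ κ (((i:ℝ)+1) * C0) C0 i
        hc.1 hc.2 hgcont hlam (hu0norm (i+2) (by omega))
        (mul_nonneg (by positivity) hC00) (fun s hs => ih (by omega) s hs) ξ hξ
      refine hb.trans (le_of_eq ?_)
      push_cast
      ring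
  -- uniform bound on all u i, 1 ≤ i ≤ m
  have hubound : ∀ i, 1 ≤ i → i ≤ m → ∀ ξ : ℝ, 0 ≤ ξ →
      ‖u i ξ‖ ≤ (m:ℝ) * C0 * ((1+ξ)^(m-1) * Real.exp (-κ*ξ)) := by
    intro i hi1 him ξ hξ
    obtain ⟨i', rfl⟩ : ∃ i', i = i' + 1 := ⟨i-1, by omega⟩
    refine (hmain i' (by omega) ξ hξ).trans ?_
    have h1 : ((i':ℝ)+1) * C0 ≤ (m:ℝ) * C0 :=
      mul_le_mul_of_nonneg_right (by exact_mod_cast (by omega : i' + 1 ≤ m)) hC00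
    have h2 : (1+ξ)^i' ≤ (1+ξ)^(m-1) := pow_le_pow_right₀ (by linarith) (by omega)
    have he := Real.exp_nonneg (-κ*ξ)
    have hp : (0:ℝ) ≤ (1+ξ)^i' := by positivity
    have := mul_le_mul h1 h2 hp (by positivity)
    calc ((i':ℝ)+1) * C0 * (1+ξ)^i' * Real.exp (-κ*ξ)
        ≤ (m:ℝ) * C0 * (1+ξ)^(m-1) * Real.exp (-κ*ξ) :=
          mul_le_mul_of_nonneg_right this he
      _ = (m:ℝ) * C0 * ((1+ξ)^(m-1) * Real.exp (-κ*ξ)) := by ring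
  -- recover the derivatives
  have hCBne : CB ≠ 0 := by linarith
  have hfinal : ∀ r, r < m → ∀ ξ : ℝ, 0 ≤ ξ →
      ‖iteratedDeriv r w ξ‖ ≤ (m:ℝ) * C0 * (1+CB)^r * ((1+ξ)^(m-1) * Real.exp (-κ*ξ)) := by
    intro r
    induction r using Nat.strong_induction_on with
    | _ r ih =>
      intro hr ξ hξ
      have hdeg' : (q (m-r)).natDegree = r := by rw [hqdeg]; omega
      have hmon : (q (m-r)).coeff r = 1 := by
        have := (monic_prod_linear (ℓ.drop (m-r))).coeff_natDegree
        rw [show ((ℓ.drop (m-r)).map fun z => X - C z).prod = q (m-r) from rfl, hdeg'] at this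
        exact this
      have hexp : u (m-r) ξ = ∑ j ∈ Finset.range (r+1), (q (m-r)).coeff j * iteratedDeriv j w ξ := by
        rw [hudef]; simp only [applyD]
        symm
        apply Finset.sum_subset
        · intro x hx
          simp only [Finset.mem_range] at hx ⊢
          omega
        · intro x hx hx2
          simp only [Finset.mem_range] at hx hx2
          rw [coeff_eq_zero_of_natDegree_lt (by omega : (q (m-r)).natDegree < x), zero_mul]
      have hdec : iteratedDeriv r w ξ
          = u (m-r) ξ - ∑ j ∈ Finset.range r, (q (m-r)).coeff j * iteratedDeriv j w ξ := by
        rw [hexp, Finset.sum_range_succ, hmon, one_mul]; ring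
      rw [hdec]
      have hE0 : (0:ℝ) ≤ (1+ξ)^(m-1) * Real.exp (-κ*ξ) := by positivity
      have step : ‖u (m-r) ξ - ∑ j ∈ Finset.range r, (q (m-r)).coeff j * iteratedDeriv j w ξ‖
          ≤ (m:ℝ) * C0 * ((1+ξ)^(m-1) * Real.exp (-κ*ξ))
            + ∑ j ∈ Finset.range r, CB * ((m:ℝ) * C0 * (1+CB)^j * ((1+ξ)^(m-1) * Real.exp (-κ*ξ))) := by
        refine (norm_sub_le _ _).trans ?_
        have hA := hubound (m-r) (by omega) (by omega) ξ hξ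
        have hB : ‖∑ j ∈ Finset.range r, (q (m-r)).coeff j * iteratedDeriv j w ξ‖
            ≤ ∑ j ∈ Finset.range r, CB * ((m:ℝ) * C0 * (1+CB)^j * ((1+ξ)^(m-1) * Real.exp (-κ*ξ))) := by
          refine (norm_sum_le _ _).trans (Finset.sum_le_sum fun j hj => ?_)
          rw [norm_mul]
          have hj' := Finset.mem_range.mp hj
          exact mul_le_mul (hcoeff _ j) (ih j (by omega) (by omega) ξ hξ) (norm_nonneg _) hCB0
        exact add_le_add hA hB
      refine step.trans (le_of_eq ?_)
      have hne1 : (1 + CB : ℝ) ≠ 1 := by intro h; linarith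
      have hgs : ∑ j ∈ Finset.range r, CB * ((m:ℝ) * C0 * (1+CB)^j * ((1+ξ)^(m-1) * Real.exp (-κ*ξ)))
          = (∑ j ∈ Finset.range r, (1+CB)^j) * (CB * ((m:ℝ) * C0 * ((1+ξ)^(m-1) * Real.exp (-κ*ξ)))) := by
        rw [Finset.sum_mul]
        exact Finset.sum_congr rfl fun j _ => by ring
      rw [hgs, geom_sum_eq hne1 r]
      have hsimp : (1 + CB - 1) = CB := by ring
      rw [hsimp]
      field_simp
      ring
  -- conclude
  intro r hr ξ hξ
  refine (hfinal r hr ξ hξ).trans ?_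
  have h2 : (1+CB)^r ≤ (1+CB)^m := pow_le_pow_right₀ (by linarith) (by omega)
  have hE0 : (0:ℝ) ≤ (1+ξ)^(m-1) * Real.exp (-κ*ξ) := by positivity
  have h3 : (m:ℝ) * C0 * (1+CB)^r ≤ (m:ℝ) * C0 * (1+CB)^m :=
    mul_le_mul_of_nonneg_left h2 (by positivity)
  calc (m:ℝ) * C0 * (1+CB)^r * ((1+ξ)^(m-1) * Real.exp (-κ*ξ))
      ≤ (m:ℝ) * C0 * (1+CB)^m * ((1+ξ)^(m-1) * Real.exp (-κ*ξ)) :=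
        mul_le_mul_of_nonneg_right h3 hE0
    _ = (m * (m * (1+R)^m * Cw) * (1 + (1+R)^m)^m) * (1+ξ)^(m-1) * Real.exp (-κ*ξ) := by
        rw [hC0def, hCBdef]; ring

lemma charPoly_eval (m : ℕ) (M : Fin m → ℂ) (z : ℂ) :
    Polynomial.eval z (charPoly m M) = z^m - ∑ j : Fin m, M j * z^(j:ℕ) := by
  rw [charPoly]
  simp [eval_finset_sum]

/-- coefficients depending continuously on parameters `t ∈ D_t ⊆ ℂ^k`
(`D_t` closed and bounded) with `Λ̄_m(a(t)) < 0` on `D_t`; then solutions decay like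
`C̃ (1 + ξ^{m-1}) e^{-κ ξ}`, uniformly in `t ∈ D_t` and initial data `N ∈ D_w`. -/
theorem uniform_exp_decay_estimate_param (m k : ℕ) (hm : 1 ≤ m) (hk : 1 ≤ k)
    (Dt : Set (Fin k → ℂ)) (hDtClosed : IsClosed Dt) (hDtBdd : Bornology.IsBounded Dt)
    (a : (Fin k → ℂ) → (Fin m → ℂ))
    (ha : ∀ j : Fin m, ContinuousOn (fun t => a t j) Dt)
    (hneg : ∀ t ∈ Dt, maxReRoots m (a t) < 0)
    (Dw : Set (Fin m → ℂ)) (hDwBdd : Bornology.IsBounded Dw) :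
    ∃ Ct : ℝ, 0 ≤ Ct ∧ ∃ κ : ℝ, 0 < κ ∧
      ∀ t ∈ Dt, ∀ N ∈ Dw,
        ∀ w : ℝ → ℂ, IsCauchySolution m (a t) N w →
          ∀ i < m, ∀ ξ : ℝ, 0 ≤ ξ →
            ‖iteratedDeriv i w ξ‖ ≤ Ct * (1 + ξ ^ (m - 1)) * Real.exp (-κ * ξ) := by
  rcases Set.eq_empty_or_nonempty Dt with rfl | ⟨t0, ht0⟩
  · exact ⟨0, le_refl 0, 1, one_pos, fun t ht => absurd ht (Set.notMem_empty t)⟩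
  have hDtCpt : IsCompact Dt := Metric.isCompact_of_isClosed_isBounded hDtClosed hDtBdd
  -- bound on coefficients
  choose Cb hCb using fun j : Fin m => hDtCpt.exists_bound_of_continuousOn (ha j)
  set R : ℝ := 1 + ∑ j : Fin m, Cb j with hRdef
  have hCb0 : ∀ j, 0 ≤ Cb j := fun j => le_trans (norm_nonneg _) (hCb j t0 ht0)
  have hR : 1 ≤ R := by
    rw [hRdef]
    have : (0:ℝ) ≤ ∑ j : Fin m, Cb j := Finset.sum_nonneg fun j _ => hCb0 j
    linarith
  have hrootR : ∀ t ∈ Dt, ∀ z ∈ (charPoly m (a t)).roots, ‖z‖ ≤ R := by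
    intro t ht z hz
    refine (charPoly_root_bound m hm (a t) z hz).trans ?_
    rw [hRdef]
    have : ∑ j : Fin m, ‖a t j‖ ≤ ∑ j : Fin m, Cb j :=
      Finset.sum_le_sum fun j _ => hCb j t ht
    linarith
  -- compact set of (parameter, root) pairs
  set g : (Fin k → ℂ) × ℂ → ℂ := fun p => p.2^m - ∑ j : Fin m, a p.1 j * p.2^(j:ℕ) with hgdef
  have hgeval : ∀ p : (Fin k → ℂ) × ℂ, g p = Polynomial.eval p.2 (charPoly m (a p.1)) := by
    intro p; rw [hgdef, charPoly_eval]
  set S : Set ((Fin k → ℂ) × ℂ) := Dt ×ˢ Metric.closedBall (0:ℂ) R with hSdef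
  have hgc : ContinuousOn g S := by
    rw [hgdef]
    apply ContinuousOn.sub
    · exact (continuous_snd.pow m).continuousOn
    · apply continuousOn_finset_sum
      intro j _
      apply ContinuousOn.mul
      · exact (ha j).comp continuous_fst.continuousOn fun p hp => (Set.mem_prod.mp hp).1
      · exact (continuous_snd.pow _).continuousOn
  have hSclosed : IsClosed S := hDtClosed.prod Metric.isClosed_closedBall
  set K : Set ((Fin k → ℂ) × ℂ) := S ∩ g ⁻¹' {0} with hKdef
  have hKclosed : IsClosed K := hgc.preimage_isClosed_of_isClosed hSclosed isClosed_singleton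
  have hKbdd : Bornology.IsBounded K :=
    ((hDtBdd.prod Metric.isBounded_closedBall).subset Set.inter_subset_left)
  have hKcpt : IsCompact K := Metric.isCompact_of_isClosed_isBounded hKclosed hKbdd
  have hchar_ne : ∀ t, charPoly m (a t) ≠ 0 := fun t => (charPoly_monic m hm (a t)).ne_zero
  have hmemK : ∀ t ∈ Dt, ∀ z ∈ (charPoly m (a t)).roots, (t, z) ∈ K := by
    intro t ht z hz
    refine ⟨Set.mem_prod.mpr ⟨ht, ?_⟩, ?_⟩
    · rw [Metric.mem_closedBall, dist_zero_right]
      exact hrootR t ht z hz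
    · rw [Set.mem_preimage, Set.mem_singleton_iff, hgeval]
      exact (mem_roots'.mp hz).2
  have hKne : K.Nonempty := by
    have hdeg0 : 0 < (charPoly m (a t0)).degree := by
      apply natDegree_pos_iff_degree_pos.mp
      rw [charPoly_natDegree m hm (a t0)]
      omega
    obtain ⟨z0, hz0⟩ := Complex.exists_root hdeg0
    exact ⟨(t0, z0), hmemK t0 ht0 z0 (mem_roots'.mpr ⟨hchar_ne t0, hz0⟩)⟩
  obtain ⟨p0, hp0K, hp0max⟩ := hKcpt.exists_isMaxOn hKne
    ((Complex.continuous_re.comp continuous_snd).continuousOn)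
  set κ : ℝ := -(p0.2.re) with hκdef
  have hroot_le_max : ∀ t ∈ Dt, ∀ z ∈ (charPoly m (a t)).roots, z.re ≤ maxReRoots m (a t) := by
    intro t ht z hz
    apply le_csSup
    · exact (((charPoly m (a t)).roots.finite_toSet).image _).bddAbove
    · exact ⟨z, hz, rfl⟩
  have hκpos : 0 < κ := by
    rw [hκdef, neg_pos]
    obtain ⟨hp0S, hp0g⟩ := hp0K
    have hp0root : p0.2 ∈ (charPoly m (a p0.1)).roots := by
      rw [mem_roots']
      refine ⟨hchar_ne p0.1, ?_⟩
      have := Set.mem_singleton_iff.mp (Set.mem_preimage.mp hp0g)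
      rwa [hgeval] at this
    have ht1 : p0.1 ∈ Dt := (Set.mem_prod.mp hp0S).1
    exact lt_of_le_of_lt (hroot_le_max p0.1 ht1 p0.2 hp0root) (hneg p0.1 ht1)
  have hroots_all : ∀ t ∈ Dt, ∀ z ∈ (charPoly m (a t)).roots, z.re ≤ -κ ∧ ‖z‖ ≤ R := by
    intro t ht z hz
    refine ⟨?_, hrootR t ht z hz⟩
    rw [hκdef, neg_neg]
    exact hp0max (hmemK t ht z hz)
  -- bound on initial data
  obtain ⟨Cw0, hCw0'⟩ := hDwBdd.exists_norm_le
  set Cw : ℝ := max Cw0 0 with hCwdef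
  have hCwnn : 0 ≤ Cw := le_max_right _ _
  have hCwj : ∀ N ∈ Dw, ∀ j : Fin m, ‖N j‖ ≤ Cw := fun N hN j =>
    (norm_le_pi_norm N j).trans ((hCw0' N hN).trans (le_max_left _ _))
  -- final constant
  set K1 : ℝ := m * (m * (1+R)^m * Cw) * (1 + (1+R)^m)^m with hK1def
  have hK1nn : 0 ≤ K1 := by rw [hK1def]; positivity
  refine ⟨K1 * 2^(m-1), by positivity, κ, hκpos, ?_⟩
  intro t ht N hN w hw i hi ξ hξ
  refine (main_estimate m hm (a t) N w hw κ R Cw hκpos hR hCwnn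
    (hroots_all t ht) (hCwj N hN) i hi ξ hξ).trans ?_
  have hp := pow_one_add_le (m-1) ξ hξ
  have he := Real.exp_nonneg (-κ*ξ)
  calc K1 * (1+ξ)^(m-1) * Real.exp (-κ*ξ)
      ≤ K1 * (2^(m-1) * (1 + ξ^(m-1))) * Real.exp (-κ*ξ) := by
        apply mul_le_mul_of_nonneg_right _ he
        exact mul_le_mul_of_nonneg_left hp hK1nn
    _ = K1 * 2^(m-1) * (1 + ξ^(m-1)) * Real.exp (-κ*ξ) := by ring
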